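/- Let V = {(ρ', θ, θ') ∈ ℝ³ : ρ' > 0} and η : V → (ℝ³ →L[ℝ] ℝ) be given by η(ρ', θ, θ') (v₁, v₂, v₃) = (1/2) * (cos(θ − θ') * v₁ + ρ' * sin(θ − θ') * (v₂ + v₃)). Define dη at x ∈ V on constant vectors u, v ∈ ℝ³ by dη x u v = fderiv ℝ (fun y => η y v) x u − fderiv ℝ (fun y => η y u) x v. Then the vector field R(ρ', θ, θ') = (2 * cos(θ − θ'), 0, 2 * sin(θ − θ')/ρ') satisfies η x (R x) = 1 and dη x (R x) v = 0 for every x ∈ V and every v ∈ ℝ³; i.e. R is the Reeb vector field of the contact 1-form η obtained by scaling reduction of the 2d harmonic oscillator phase space (Example 3.4 of the paper). -/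

import Mathlib

open Real

noncomputable section

/-- The contact 1-form `η = ½(cos(θ−θ') dρ' + ρ' sin(θ−θ')(dθ + dθ'))` on
`V = {(ρ', θ, θ') : ρ' > 0}`, evaluated on a constant vector `v = (v₁, v₂, v₃)`. -/
def etaForm (x : ℝ × ℝ × ℝ) (v : ℝ × ℝ × ℝ) : ℝ :=
  (1 / 2) * (cos (x.2.1 - x.2.2) * v.1 + x.1 * sin (x.2.1 - x.2.2) * (v.2.1 + v.2.2))

/-- The exterior differential of `η` at `x`, evaluated on constant vectors `u, v`. -/
def dEta (x : ℝ × ℝ × ℝ) (u v : ℝ × ℝ × ℝ) : ℝ :=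
  fderiv ℝ (fun y => etaForm y v) x u - fderiv ℝ (fun y => etaForm y u) x v

/-- The candidate Reeb vector field `R(ρ', θ, θ') = (2 cos(θ−θ'), 0, 2 sin(θ−θ')/ρ')`. -/
def reebVF (x : ℝ × ℝ × ℝ) : ℝ × ℝ × ℝ :=
  (2 * cos (x.2.1 - x.2.2), 0, 2 * sin (x.2.1 - x.2.2) / x.1)

lemma etaForm_fderiv (x v u : ℝ × ℝ × ℝ) :
    fderiv ℝ (fun y => etaForm y v) x u =
      (1 / 2) * (-(sin (x.2.1 - x.2.2)) * (u.2.1 - u.2.2) * v.1 +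
        (u.1 * sin (x.2.1 - x.2.2) + x.1 * cos (x.2.1 - x.2.2) * (u.2.1 - u.2.2)) *
          (v.2.1 + v.2.2)) := by
  have hθ : HasFDerivAt (fun y : ℝ × ℝ × ℝ => y.2.1 - y.2.2)
      (((ContinuousLinearMap.fst ℝ ℝ ℝ).comp (ContinuousLinearMap.snd ℝ ℝ (ℝ × ℝ))) -
        ((ContinuousLinearMap.snd ℝ ℝ ℝ).comp (ContinuousLinearMap.snd ℝ ℝ (ℝ × ℝ)))) x :=
    ((hasFDerivAt_fst.comp x hasFDerivAt_snd).sub (hasFDerivAt_snd.comp x hasFDerivAt_snd))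
  have hcos := (Real.hasDerivAt_cos (x.2.1 - x.2.2)).comp_hasFDerivAt x hθ
  have hsin := (Real.hasDerivAt_sin (x.2.1 - x.2.2)).comp_hasFDerivAt x hθ
  have h1 : HasFDerivAt (fun y : ℝ × ℝ × ℝ => y.1)
      (ContinuousLinearMap.fst ℝ ℝ (ℝ × ℝ)) x := hasFDerivAt_fst
  have H := (((hcos.mul_const v.1).add ((h1.mul hsin).mul_const (v.2.1 + v.2.2))).const_mul
      (1 / 2 : ℝ))
  simp only [Function.comp_def, Pi.add_apply, Pi.mul_apply] at H
  rw [show (fun y => etaForm y v) = fun y : ℝ × ℝ × ℝ =>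
      (1 / 2) * (cos (y.2.1 - y.2.2) * v.1 + y.1 * sin (y.2.1 - y.2.2) * (v.2.1 + v.2.2))
    from rfl, H.fderiv]
  simp [ContinuousLinearMap.comp_apply]
  ring

/-- `R` is the Reeb vector field of the contact 1-form `η` obtained by
scaling reduction of the 2d harmonic oscillator phase space: `η(R) = 1` and
`i_R dη = 0`. -/
theorem reeb_of_harmonic_oscillator_contact_form :
    ∀ x : ℝ × ℝ × ℝ, 0 < x.1 →
      etaForm x (reebVF x) = 1 ∧ ∀ v : ℝ × ℝ × ℝ, dEta x (reebVF x) v = 0 := by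
  intro x hx
  have hx' : x.1 ≠ 0 := ne_of_gt hx
  have hpyth := sin_sq_add_cos_sq (x.2.1 - x.2.2)
  constructor
  · simp only [etaForm, reebVF]
    field_simp
    nlinarith [hpyth]
  · intro v
    rw [dEta, etaForm_fderiv, etaForm_fderiv]
    simp only [reebVF]
    field_simp
    ring
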